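/- arXiv:1711.02024 — 3 statements merged into one kernel-verified Lean document; each statement's English description precedes it below -/
import Mathlib

section
/- For every nonnegative integer n, the supremum over t ∈ [0,1) of t^n / log(e/(1-t)) is comparable (up to absolute multiplicative constants) to 1/log(n+2). -/
open Set Real

lemma geom_aux (t : ℝ) (ht0 : 0 ≤ t) (ht1 : t ≤ 1) (n : ℕ) :
    ((n : ℝ) + 1) * (t ^ n * (1 - t)) ≤ 1 - t ^ (n + 1) := by
  induction n with
  | zero => simp
  | succ n ih =>
    simp only [pow_succ] at ih ⊢
    have h2 : 0 ≤ t ^ n := pow_nonneg ht0 n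
    have h0 : t ^ n ≤ 1 := pow_le_one₀ ht0 ht1
    have h1 : t ^ n * t ≤ 1 := by nlinarith
    have ih' := mul_le_mul_of_nonneg_left ih ht0
    push_cast at ih' ⊢
    nlinarith [mul_nonneg (by nlinarith : (0:ℝ) ≤ 1 - t^n * t) (by linarith : (0:ℝ) ≤ 1 - t)]

lemma upper_aux (n : ℕ) (t : ℝ) (ht : t ∈ Ico (0:ℝ) 1) :
    t ^ n / Real.log (Real.exp 1 / (1 - t)) ≤ 4 / Real.log ((n : ℝ) + 2) := by
  obtain ⟨ht0, ht1⟩ := ht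
  have hn : (0:ℝ) ≤ (n:ℝ) := Nat.cast_nonneg n
  have hL : 0 < Real.log ((n:ℝ) + 2) := Real.log_pos (by linarith)
  set L := Real.log ((n:ℝ) + 2) with hLdef
  have hu0 : (0:ℝ) < 1 - t := by linarith
  have hu1 : 1 - t ≤ 1 := by linarith
  have hD : Real.log (Real.exp 1 / (1 - t)) = 1 - Real.log (1 - t) := by
    rw [Real.log_div (Real.exp_ne_zero 1) (ne_of_gt hu0), Real.log_exp]
  have hD1 : 1 ≤ 1 - Real.log (1 - t) := by
    have := Real.log_nonpos hu0.le hu1; linarith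
  have htn0 : 0 ≤ t ^ n := pow_nonneg ht0 n
  have htn1 : t ^ n ≤ 1 := pow_le_one₀ ht0 ht1.le
  rw [hD]
  rcases le_or_gt (((n:ℝ) + 2) * (1 - t)^2) 1 with h | h
  · have hlogu : 2 * Real.log (1 - t) ≤ -L := by
      have h0 : Real.log (((n:ℝ)+2) * (1 - t)^2) ≤ 0 :=
        Real.log_nonpos (by positivity) h
      rw [Real.log_mul (by positivity) (by positivity), Real.log_pow] at h0
      push_cast at h0
      linarith
    have hden : L / 2 ≤ 1 - Real.log (1 - t) := by linarith
    have h1 : t ^ n / (1 - Real.log (1 - t)) ≤ 1 / (L / 2) :=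
      div_le_div₀ (by norm_num) htn1 (by positivity) hden
    have h2 : (1:ℝ) / (L / 2) = 2 / L := by ring
    have h3 : (2:ℝ) / L ≤ 4 / L := by gcongr; norm_num
    linarith [h1, h2 ▸ h1]
  · set s := Real.sqrt ((n:ℝ) + 2) with hsdef
    have hs0 : 0 < s := Real.sqrt_pos.mpr (by linarith)
    have hs2 : s ^ 2 = (n:ℝ) + 2 := Real.sq_sqrt (by linarith)
    have hus : 1 / s ≤ 1 - t := by
      rw [div_le_iff₀ hs0]
      nlinarith [mul_pos hu0 hs0]
    have hlogs : L ≤ 2 * s := by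
      have h1 : Real.log s ≤ s - 1 := Real.log_le_sub_one_of_pos hs0
      have h2 : L = 2 * Real.log s := by
        rw [hLdef, ← hs2, Real.log_pow]; push_cast; ring
      linarith
    have h5 : t ^ n * (((n:ℝ) + 1) * (1 - t)) ≤ 1 := by
      have := geom_aux t ht0 ht1.le n
      have h6 : 0 ≤ t ^ (n+1) := pow_nonneg ht0 _
      nlinarith
    have h6 : t ^ n ≤ 1 / (((n:ℝ) + 1) * (1 - t)) := by
      rw [le_div_iff₀ (by positivity)]
      linarith
    have h7 : t ^ n / (1 - Real.log (1 - t)) ≤ t ^ n := div_le_self htn0 hD1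
    have h8 : L ≤ 4 * (((n:ℝ) + 1) * (1 - t)) := by
      have hLs : L * s ≤ 2 * ((n:ℝ) + 2) := by nlinarith
      have h9 : L ≤ 4 * ((n:ℝ) + 1) / s := by
        rw [le_div_iff₀ hs0]; nlinarith
      calc L ≤ 4 * ((n:ℝ) + 1) / s := h9
        _ = 4 * ((n:ℝ) + 1) * (1 / s) := by ring
        _ ≤ 4 * ((n:ℝ) + 1) * (1 - t) :=
            mul_le_mul_of_nonneg_left hus (by linarith)
        _ = 4 * (((n:ℝ) + 1) * (1 - t)) := by ring
    have h10 : 1 / (((n:ℝ) + 1) * (1 - t)) ≤ 4 / L := by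
      rw [div_le_div_iff₀ (by positivity) hL]
      linarith
    linarith

lemma lower_aux (n : ℕ) :
    ∃ t ∈ Ico (0:ℝ) 1,
      (1/8 : ℝ) / Real.log ((n:ℝ) + 2) ≤ t ^ n / Real.log (Real.exp 1 / (1 - t)) := by
  have hn : (0:ℝ) ≤ (n:ℝ) := Nat.cast_nonneg n
  have hL : 0 < Real.log ((n:ℝ) + 2) := Real.log_pos (by linarith)
  set L := Real.log ((n:ℝ) + 2) with hLdef
  set t : ℝ := 1 - 1 / (2 * ((n:ℝ) + 1)) with htdef
  have hden : (0:ℝ) < 2 * ((n:ℝ) + 1) := by linarith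
  have heps0 : (0:ℝ) < 1 / (2 * ((n:ℝ) + 1)) := by positivity
  have heps2 : 1 / (2 * ((n:ℝ) + 1)) ≤ 1/2 := by
    rw [div_le_div_iff₀ hden (by norm_num)]; linarith
  have ht0 : (0:ℝ) ≤ t := by rw [htdef]; linarith
  have ht1 : t < 1 := by rw [htdef]; linarith
  refine ⟨t, ⟨ht0, ht1⟩, ?_⟩
  have h1t : 1 - t = 1 / (2 * ((n:ℝ) + 1)) := by rw [htdef]; ring
  have hD : Real.log (Real.exp 1 / (1 - t)) = 1 + Real.log (2 * ((n:ℝ) + 1)) := by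
    rw [h1t, Real.log_div (Real.exp_ne_zero 1) (by positivity), Real.log_exp,
      Real.log_div one_ne_zero (by positivity), Real.log_one]
    ring
  have hpow : (1/2 : ℝ) ≤ t ^ n := by
    have hb := one_add_mul_le_pow (a := -(1 / (2 * ((n:ℝ) + 1)))) (by nlinarith) n
    have h2 : (1:ℝ) + (n:ℝ) * -(1 / (2 * ((n:ℝ) + 1))) = 1 - (n:ℝ) / (2 * ((n:ℝ) + 1)) := by
      ring
    have h3 : (n:ℝ) / (2 * ((n:ℝ) + 1)) ≤ 1/2 := by
      rw [div_le_div_iff₀ hden (by norm_num)]; linarith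
    have h4 : (1:ℝ) + -(1 / (2 * ((n:ℝ) + 1))) = t := by rw [htdef]; ring
    rw [h4] at hb
    linarith [hb, h2 ▸ hb]
  have h1le : (1:ℝ) ≤ 2 * L := by
    have he : Real.exp 1 ≤ ((n:ℝ) + 2) ^ 2 := by
      nlinarith [Real.exp_one_lt_d9.le]
    have := Real.log_le_log (Real.exp_pos 1) he
    rw [Real.log_exp, Real.log_pow] at this
    push_cast at this
    linarith
  have h2le : Real.log (2 * ((n:ℝ) + 1)) ≤ 2 * L := by
    have h5 : 2 * ((n:ℝ) + 1) ≤ ((n:ℝ) + 2) ^ 2 := by nlinarith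
    have := Real.log_le_log (by linarith) h5
    rw [Real.log_pow] at this
    push_cast at this
    linarith
  have hDle : Real.log (Real.exp 1 / (1 - t)) ≤ 4 * L := by rw [hD]; linarith
  have hDpos : 0 < Real.log (Real.exp 1 / (1 - t)) := by
    rw [hD]
    have : 0 ≤ Real.log (2 * ((n:ℝ) + 1)) := Real.log_nonneg (by linarith)
    linarith
  calc (1/8 : ℝ) / L = (1/2) / (4 * L) := by ring
    _ ≤ t ^ n / Real.log (Real.exp 1 / (1 - t)) :=
        div_le_div₀ (by positivity) hpow hDpos hDle

theorem monomial_norm_log_weight :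
    ∃ c C : ℝ, 0 < c ∧ 0 < C ∧ ∀ n : ℕ,
      c / Real.log ((n : ℝ) + 2) ≤
        sSup {x : ℝ | ∃ t ∈ Ico (0:ℝ) 1, x = t ^ n / Real.log (Real.exp 1 / (1 - t))} ∧
      sSup {x : ℝ | ∃ t ∈ Ico (0:ℝ) 1, x = t ^ n / Real.log (Real.exp 1 / (1 - t))} ≤
        C / Real.log ((n : ℝ) + 2) := by
  refine ⟨1/8, 4, by norm_num, by norm_num, fun n => ?_⟩
  have hn : (0:ℝ) ≤ (n:ℝ) := Nat.cast_nonneg n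
  have hL : 0 < Real.log ((n:ℝ) + 2) := Real.log_pos (by linarith)
  set S := {x : ℝ | ∃ t ∈ Ico (0:ℝ) 1, x = t ^ n / Real.log (Real.exp 1 / (1 - t))} with hS
  have hbdd : BddAbove S := by
    refine ⟨4 / Real.log ((n:ℝ) + 2), ?_⟩
    rintro x ⟨t, ht, rfl⟩
    exact upper_aux n t ht
  constructor
  · obtain ⟨t, ht, hle⟩ := lower_aux n
    exact le_trans hle (le_csSup hbdd ⟨t, ht, rfl⟩)
  · refine Real.sSup_le ?_ (by positivity)
    rintro x ⟨t, ht, rfl⟩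
    exact upper_aux n t ht
end

section
/- Let α < 0 and let g be holomorphic and φ : 𝔻 → 𝔻 holomorphic. If the weighted composition operator f ↦ g·(f∘φ) maps the growth space Λ^β (β<0, with norm sup |f(z)|(1-|z|)^{-β}) boundedly into Λ^α (norm sup |f(z)|(1-|z|)^{-α}), then sup_{z∈𝔻} |g(z)|(1-|z|)^{-α}(1-|φ(z)|)^{β} < ∞. -/
open Metric

theorem bounded_wco_necessity (α β : ℝ) (hα : α < 0) (hβ : β < 0)
    (g φ : ℂ → ℂ)
    (hg : DifferentiableOn ℂ g (ball (0:ℂ) 1))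
    (hφ : DifferentiableOn ℂ φ (ball (0:ℂ) 1))
    (hφm : ∀ z ∈ ball (0:ℂ) 1, φ z ∈ ball (0:ℂ) 1)
    (M : ℝ)
    (hbdd : ∀ f : ℂ → ℂ, DifferentiableOn ℂ f (ball (0:ℂ) 1) →
      (∀ z ∈ ball (0:ℂ) 1, ‖f z‖ * (1 - ‖z‖) ^ (-β) ≤ 1) →
      ∀ z ∈ ball (0:ℂ) 1, ‖g z * f (φ z)‖ * (1 - ‖z‖) ^ (-α) ≤ M) :
    ∃ M' : ℝ, ∀ z ∈ ball (0:ℂ) 1,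
      ‖g z‖ * (1 - ‖z‖) ^ (-α) * (1 - ‖φ z‖) ^ β ≤ M' := by
  refine ⟨(2:ℝ) ^ (-β) * M, fun z hz => ?_⟩
  set w := φ z with hwdef
  have hw : ‖w‖ < 1 := by simpa using hφm z hz
  have hw0 : (0:ℝ) ≤ ‖w‖ := norm_nonneg _
  -- the test function
  set f : ℂ → ℂ := fun ζ => (1 - ζ * (starRingEnd ℂ) w) ^ (β : ℂ) with hfdef
  have hslit : ∀ ζ ∈ ball (0:ℂ) 1, (1 - ζ * (starRingEnd ℂ) w) ∈ Complex.slitPlane := by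
    intro ζ hζ
    have hζ1 : ‖ζ‖ < 1 := by simpa using hζ
    rw [Complex.mem_slitPlane_iff]
    left
    have h1 : (ζ * (starRingEnd ℂ) w).re ≤ ‖ζ‖ * ‖w‖ := by
      calc (ζ * (starRingEnd ℂ) w).re ≤ ‖ζ * (starRingEnd ℂ) w‖ := Complex.re_le_norm _
        _ = ‖ζ‖ * ‖w‖ := by
            simp [map_mul]
    have h2 : ‖ζ‖ * ‖w‖ < 1 := by
      calc ‖ζ‖ * ‖w‖ ≤ ‖ζ‖ * 1 := by
            exact mul_le_mul_of_nonneg_left hw.le (norm_nonneg _)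
        _ < 1 := by simpa using hζ1
    simp only [Complex.sub_re, Complex.one_re]
    linarith
  have hfd : DifferentiableOn ℂ f (ball (0:ℂ) 1) := by
    intro ζ hζ
    refine DifferentiableAt.differentiableWithinAt ?_
    exact DifferentiableAt.cpow (by fun_prop) (differentiableAt_const _) (hslit ζ hζ)
  -- norm lower bound for base
  have hbase : ∀ ζ : ℂ, ‖ζ‖ < 1 → 1 - ‖ζ‖ ≤ ‖1 - ζ * (starRingEnd ℂ) w‖ := by
    intro ζ hζ1
    have h1 : ‖(1:ℂ)‖ - ‖ζ * (starRingEnd ℂ) w‖ ≤ ‖(1:ℂ) - ζ * (starRingEnd ℂ) w‖ :=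
      norm_sub_norm_le _ _
    have h2 : ‖ζ * (starRingEnd ℂ) w‖ = ‖ζ‖ * ‖w‖ := by simp
    have h3 : ‖ζ‖ * ‖w‖ ≤ ‖ζ‖ := by
      calc ‖ζ‖ * ‖w‖ ≤ ‖ζ‖ * 1 := mul_le_mul_of_nonneg_left hw.le (norm_nonneg _)
        _ = ‖ζ‖ := mul_one _
    simp only [norm_one] at h1
    linarith [h1, h2.symm ▸ h3]
  -- test condition
  have htest : ∀ ζ ∈ ball (0:ℂ) 1, ‖f ζ‖ * (1 - ‖ζ‖) ^ (-β) ≤ 1 := by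
    intro ζ hζ
    have hζ1 : ‖ζ‖ < 1 := by simpa using hζ
    have hpos : (0:ℝ) < 1 - ‖ζ‖ := by linarith
    have hnorm : ‖f ζ‖ = ‖1 - ζ * (starRingEnd ℂ) w‖ ^ β := by
      simp only [hfdef]
      exact Complex.norm_cpow_real _ _
    have h1 : ‖1 - ζ * (starRingEnd ℂ) w‖ ^ β ≤ (1 - ‖ζ‖) ^ β :=
      Real.rpow_le_rpow_of_nonpos hpos (hbase ζ hζ1) hβ.le
    calc ‖f ζ‖ * (1 - ‖ζ‖) ^ (-β) ≤ (1 - ‖ζ‖) ^ β * (1 - ‖ζ‖) ^ (-β) := by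
          rw [hnorm]
          exact mul_le_mul_of_nonneg_right h1 (Real.rpow_nonneg hpos.le _)
      _ = 1 := by
          rw [← Real.rpow_add hpos]; simp
  have hmain := hbdd f hfd htest z hz
  -- compute ‖f w‖
  have hww : (1 : ℂ) - w * (starRingEnd ℂ) w = ((1 - ‖w‖^2 : ℝ) : ℂ) := by
    rw [Complex.mul_conj, Complex.normSq_eq_norm_sq]
    push_cast
    ring
  have hwpos : (0:ℝ) < 1 - ‖w‖^2 := by nlinarith
  have hfw : ‖f w‖ = (1 - ‖w‖^2) ^ β := by
    simp only [hfdef]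
    rw [hww, Complex.norm_cpow_real, Complex.norm_real, Real.norm_eq_abs, abs_of_pos hwpos]
  have hmain2 : ‖g z‖ * (1 - ‖z‖) ^ (-α) * (1 - ‖w‖^2) ^ β ≤ M := by
    rw [norm_mul, hfw] at hmain
    linarith [hmain]
  -- compare (1-‖w‖)^β with (1-‖w‖²)^β
  have h1w : (0:ℝ) < 1 - ‖w‖ := by linarith
  have hcomp : (1 - ‖w‖) ^ β ≤ (2:ℝ) ^ (-β) * (1 - ‖w‖^2) ^ β := by
    have h1 : (2 * (1 - ‖w‖)) ^ β ≤ (1 - ‖w‖^2) ^ β := by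
      apply Real.rpow_le_rpow_of_nonpos hwpos (by nlinarith [sq_nonneg (1 - ‖w‖)]) hβ.le
    have h2 : (2 * (1 - ‖w‖)) ^ β = (2:ℝ) ^ β * (1 - ‖w‖) ^ β :=
      Real.mul_rpow (by norm_num) h1w.le
    have h3 : (0:ℝ) < (2:ℝ) ^ (-β) := Real.rpow_pos_of_pos (by norm_num) _
    have h4 : (2:ℝ) ^ (-β) * ((2:ℝ) ^ β * (1 - ‖w‖) ^ β) = (1 - ‖w‖) ^ β := by
      rw [← mul_assoc, ← Real.rpow_add (by norm_num)]; simp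
    calc (1 - ‖w‖) ^ β = (2:ℝ) ^ (-β) * ((2:ℝ) ^ β * (1 - ‖w‖) ^ β) := h4.symm
      _ = (2:ℝ) ^ (-β) * (2 * (1 - ‖w‖)) ^ β := by rw [h2]
      _ ≤ (2:ℝ) ^ (-β) * (1 - ‖w‖^2) ^ β := mul_le_mul_of_nonneg_left h1 h3.le
  have hgpos : (0:ℝ) ≤ ‖g z‖ * (1 - ‖z‖) ^ (-α) := by
    have hz1 : ‖z‖ < 1 := by simpa using hz
    exact mul_nonneg (norm_nonneg _) (Real.rpow_nonneg (by linarith) _)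
  calc ‖g z‖ * (1 - ‖z‖) ^ (-α) * (1 - ‖w‖) ^ β
      ≤ ‖g z‖ * (1 - ‖z‖) ^ (-α) * ((2:ℝ) ^ (-β) * (1 - ‖w‖^2) ^ β) :=
        mul_le_mul_of_nonneg_left hcomp hgpos
    _ = (2:ℝ) ^ (-β) * (‖g z‖ * (1 - ‖z‖) ^ (-α) * (1 - ‖w‖^2) ^ β) := by ring
    _ ≤ (2:ℝ) ^ (-β) * M := by
        exact mul_le_mul_of_nonneg_left hmain2 (Real.rpow_nonneg (by norm_num) _)
end

section
/- Let ω, ν be weights on [0,1), g holomorphic on 𝔻 and φ : 𝔻 → 𝔻 holomorphic. Then limsup_{n→∞} ‖g·φ^n‖_{H^∞_ν} / ‖z^n‖_{H^∞_ω} ≤ limsup_{|φ(z)|→1} |g(z)| ω̃(|φ(z)|)/ν(|z|), where ω̃ is the associated weight of ω, assuming the right-hand side is finite and sup_z |g(z)|/ν(|z|) < ∞. -/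
open Metric Set

/-- The associated weight of `ω`: `ω̃(t) = sup {|f(t)| : f holomorphic on 𝔻, |f| ≤ ω(|·|)}`. -/
noncomputable def assocWeight (ω : ℝ → ℝ) (t : ℝ) : ℝ :=
  sSup {x : ℝ | ∃ f : ℂ → ℂ, DifferentiableOn ℂ f (ball (0:ℂ) 1) ∧
    (∀ z ∈ ball (0:ℂ) 1, ‖f z‖ ≤ ω ‖z‖) ∧ x = ‖f (t : ℂ)‖}

section Aux

variable {ω : ℝ → ℝ}

lemma Sn_bdd (hωp : ∀ t ∈ Ico (0:ℝ) 1, 0 < ω t) (hωm : MonotoneOn ω (Ico (0:ℝ) 1)) (n : ℕ) :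
    BddAbove {x : ℝ | ∃ t ∈ Ico (0:ℝ) 1, x = t ^ n / ω t} := by
  refine ⟨1 / ω 0, ?_⟩
  rintro x ⟨t, ht, rfl⟩
  have h0 : (0:ℝ) ∈ Ico (0:ℝ) 1 := ⟨le_refl 0, one_pos⟩
  have hω0 : 0 < ω 0 := hωp 0 h0
  have hωt : ω 0 ≤ ω t := hωm h0 ht ht.1
  have htn : t ^ n ≤ 1 := pow_le_one₀ ht.1 ht.2.le
  exact div_le_div₀ zero_le_one htn hω0 hωt

lemma le_Sn (hωp : ∀ t ∈ Ico (0:ℝ) 1, 0 < ω t) (hωm : MonotoneOn ω (Ico (0:ℝ) 1)) (n : ℕ)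
    {t : ℝ} (ht : t ∈ Ico (0:ℝ) 1) :
    t ^ n / ω t ≤ sSup {x : ℝ | ∃ t ∈ Ico (0:ℝ) 1, x = t ^ n / ω t} :=
  le_csSup (Sn_bdd hωp hωm n) ⟨t, ht, rfl⟩

lemma Sn_pos (hωp : ∀ t ∈ Ico (0:ℝ) 1, 0 < ω t) (hωm : MonotoneOn ω (Ico (0:ℝ) 1)) (n : ℕ) :
    0 < sSup {x : ℝ | ∃ t ∈ Ico (0:ℝ) 1, x = t ^ n / ω t} := by
  have h : ((1:ℝ)/2) ∈ Ico (0:ℝ) 1 := by norm_num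
  refine lt_of_lt_of_le ?_ (le_Sn hωp hωm n h)
  exact div_pos (pow_pos (by norm_num) n) (hωp _ h)

/-- key lower bound on the associated weight: `t^n ≤ ω̃(t) * Sₙ`. -/
lemma pow_le_assoc (hωp : ∀ t ∈ Ico (0:ℝ) 1, 0 < ω t) (hωm : MonotoneOn ω (Ico (0:ℝ) 1))
    (n : ℕ) {t : ℝ} (ht : t ∈ Ico (0:ℝ) 1) :
    t ^ n ≤ assocWeight ω t * sSup {x : ℝ | ∃ t ∈ Ico (0:ℝ) 1, x = t ^ n / ω t} := by
  set S := sSup {x : ℝ | ∃ t ∈ Ico (0:ℝ) 1, x = t ^ n / ω t} with hS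
  have hSpos : 0 < S := Sn_pos hωp hωm n
  have hbdd : BddAbove {x : ℝ | ∃ f : ℂ → ℂ, DifferentiableOn ℂ f (ball (0:ℂ) 1) ∧
      (∀ z ∈ ball (0:ℂ) 1, ‖f z‖ ≤ ω ‖z‖) ∧ x = ‖f (t : ℂ)‖} := by
    refine ⟨ω t, ?_⟩
    rintro x ⟨f, hf, hfb, rfl⟩
    have htb : (t:ℂ) ∈ ball (0:ℂ) 1 := by
      simp [Complex.norm_real, abs_of_nonneg ht.1, ht.2]
    have := hfb _ htb
    rwa [Complex.norm_real, Real.norm_eq_abs, abs_of_nonneg ht.1] at this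
  have hmem : t ^ n / S ∈ {x : ℝ | ∃ f : ℂ → ℂ, DifferentiableOn ℂ f (ball (0:ℂ) 1) ∧
      (∀ z ∈ ball (0:ℂ) 1, ‖f z‖ ≤ ω ‖z‖) ∧ x = ‖f (t : ℂ)‖} := by
    refine ⟨fun z => z ^ n / (S : ℂ), ?_, ?_, ?_⟩
    · exact (differentiableOn_pow n).div_const _
    · intro z hz
      have hz1 : ‖z‖ ∈ Ico (0:ℝ) 1 := ⟨norm_nonneg z, by simpa using hz⟩
      have h1 : ‖z‖ ^ n / ω ‖z‖ ≤ S := le_Sn hωp hωm n hz1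
      have h2 : ‖z‖ ^ n ≤ S * ω ‖z‖ := (div_le_iff₀ (hωp _ hz1)).mp h1
      have : ‖z ^ n / (S:ℂ)‖ = ‖z‖ ^ n / S := by
        simp [norm_div, norm_pow, Complex.norm_real, abs_of_pos hSpos]
      rw [this, div_le_iff₀ hSpos]
      linarith [h2]
    · rw [norm_div, norm_pow, Complex.norm_real, Real.norm_eq_abs, Complex.norm_real,
        Real.norm_eq_abs, abs_of_nonneg ht.1, abs_of_pos hSpos]
  have := le_csSup hbdd hmem
  rw [assocWeight]
  calc t ^ n = (t ^ n / S) * S := by field_simp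
  _ ≤ _ := mul_le_mul_of_nonneg_right this hSpos.le

end Aux

theorem essential_limsup_upper_bound (ω ν : ℝ → ℝ)
    (hωc : ContinuousOn ω (Ico (0:ℝ) 1)) (hωp : ∀ t ∈ Ico (0:ℝ) 1, 0 < ω t)
    (hωm : MonotoneOn ω (Ico (0:ℝ) 1)) (hωu : ¬ BddAbove (ω '' Ico (0:ℝ) 1))
    (hνc : ContinuousOn ν (Ico (0:ℝ) 1)) (hνp : ∀ t ∈ Ico (0:ℝ) 1, 0 < ν t)
    (hνm : MonotoneOn ν (Ico (0:ℝ) 1)) (hνu : ¬ BddAbove (ν '' Ico (0:ℝ) 1))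
    (g φ : ℂ → ℂ)
    (hg : DifferentiableOn ℂ g (ball (0:ℂ) 1))
    (hφ : DifferentiableOn ℂ φ (ball (0:ℂ) 1))
    (hφm : ∀ z ∈ ball (0:ℂ) 1, φ z ∈ ball (0:ℂ) 1)
    (hgb : ∃ M : ℝ, ∀ z ∈ ball (0:ℂ) 1, ‖g z‖ / ν ‖z‖ ≤ M)
    (L : ℝ) (hL : 0 ≤ L)
    (hlimsup : ∀ ε > (0:ℝ), ∃ δ ∈ Ico (0:ℝ) 1, ∀ z ∈ ball (0:ℂ) 1,
      δ < ‖φ z‖ → ‖g z‖ * assocWeight ω ‖φ z‖ / ν ‖z‖ ≤ L + ε) :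
    ∀ ε > (0:ℝ), ∃ K : ℕ, ∀ n ≥ K, ∀ z ∈ ball (0:ℂ) 1,
      ‖g z * (φ z) ^ n‖ / ν ‖z‖ ≤
        (L + ε) * sSup {x : ℝ | ∃ t ∈ Ico (0:ℝ) 1, x = t ^ n / ω t} := by
  intro ε hε
  obtain ⟨δ, hδ, hδ2⟩ := hlimsup ε hε
  obtain ⟨M, hM⟩ := hgb
  have h0b : (0:ℂ) ∈ ball (0:ℂ) 1 := by simp
  have hM0 : 0 ≤ M := le_trans (div_nonneg (norm_nonneg _) (hνp _ (by norm_num : ‖(0:ℂ)‖ ∈ Ico (0:ℝ) 1)).le) (hM 0 h0b)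
  set t0 : ℝ := (δ + 1) / 2 with ht0def
  have ht0pos : 0 < t0 := by simp [ht0def]; linarith [hδ.1]
  have ht0mem : t0 ∈ Ico (0:ℝ) 1 := ⟨ht0pos.le, by simp [ht0def]; linarith [hδ.2]⟩
  have hδt0 : δ < t0 := by simp [ht0def]; linarith [hδ.2]
  set r : ℝ := δ / t0 with hrdef
  have hr0 : 0 ≤ r := div_nonneg hδ.1 ht0pos.le
  have hr1 : r < 1 := (div_lt_one ht0pos).mpr hδt0
  have hten : Filter.Tendsto (fun n : ℕ => M * ω t0 * r ^ n) Filter.atTop (nhds 0) := by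
    have := tendsto_pow_atTop_nhds_zero_of_lt_one hr0 hr1
    simpa using (this.const_mul (M * ω t0))
  have hev : ∀ᶠ n in Filter.atTop, M * ω t0 * r ^ n ≤ L + ε := by
    filter_upwards [hten.eventually (eventually_le_nhds (by linarith : (0:ℝ) < L + ε))] with n h
    exact h
  obtain ⟨K, hK⟩ := Filter.eventually_atTop.mp hev
  refine ⟨K, fun n hn z hz => ?_⟩
  set S := sSup {x : ℝ | ∃ t ∈ Ico (0:ℝ) 1, x = t ^ n / ω t} with hSdef
  have hSpos : 0 < S := Sn_pos hωp hωm n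
  have hzmem : ‖z‖ ∈ Ico (0:ℝ) 1 := ⟨norm_nonneg z, by simpa using hz⟩
  have hν : 0 < ν ‖z‖ := hνp _ hzmem
  have hφz : ‖φ z‖ ∈ Ico (0:ℝ) 1 := ⟨norm_nonneg _, by simpa using hφm z hz⟩
  have hnorm : ‖g z * (φ z) ^ n‖ = ‖g z‖ * ‖φ z‖ ^ n := by
    rw [norm_mul, norm_pow]
  rcases le_or_gt ‖φ z‖ δ with hc | hc
  · -- small case
    have hgz : ‖g z‖ ≤ M * ν ‖z‖ := (div_le_iff₀ hν).mp (hM z hz)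
    have hφn : ‖φ z‖ ^ n ≤ δ ^ n := pow_le_pow_left₀ (norm_nonneg _) hc n
    have hSt0 : t0 ^ n / ω t0 ≤ S := le_Sn hωp hωm n ht0mem
    have hωt0 : 0 < ω t0 := hωp _ ht0mem
    have hδn : δ ^ n = r ^ n * t0 ^ n := by
      rw [hrdef, div_pow, div_mul_cancel₀]
      exact pow_ne_zero n ht0pos.ne'
    have key : M * δ ^ n ≤ (L + ε) * S := by
      have h1 : M * δ ^ n = (M * ω t0 * r ^ n) * (t0 ^ n / ω t0) := by
        rw [hδn]; field_simp
      rw [h1]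
      have hnn : 0 ≤ M * ω t0 * r ^ n :=
        mul_nonneg (mul_nonneg hM0 hωt0.le) (pow_nonneg hr0 n)
      exact mul_le_mul (hK n hn) hSt0 (div_nonneg (pow_nonneg ht0pos.le n) hωt0.le)
        (by linarith)
    rw [hnorm, div_le_iff₀ hν]
    calc ‖g z‖ * ‖φ z‖ ^ n ≤ (M * ν ‖z‖) * δ ^ n :=
          mul_le_mul hgz hφn (pow_nonneg (norm_nonneg _) n) (by positivity)
      _ = (M * δ ^ n) * ν ‖z‖ := by ring
      _ ≤ ((L + ε) * S) * ν ‖z‖ := mul_le_mul_of_nonneg_right key hν.le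
  · -- big case
    have hassoc : ‖φ z‖ ^ n ≤ assocWeight ω ‖φ z‖ * S := pow_le_assoc hωp hωm n hφz
    have hawnn : 0 ≤ assocWeight ω ‖φ z‖ * S := le_trans (pow_nonneg (norm_nonneg _) n) hassoc
    have haw : 0 ≤ assocWeight ω ‖φ z‖ := nonneg_of_mul_nonneg_right (by linarith [hawnn] : (0:ℝ) ≤ S * assocWeight ω ‖φ z‖) hSpos
    have hlim := hδ2 z hz hc
    rw [hnorm, div_le_iff₀ hν]
    have h1 : ‖g z‖ * ‖φ z‖ ^ n ≤ ‖g z‖ * (assocWeight ω ‖φ z‖ * S) :=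
      mul_le_mul_of_nonneg_left hassoc (norm_nonneg _)
    have h2 : ‖g z‖ * assocWeight ω ‖φ z‖ ≤ (L + ε) * ν ‖z‖ := (div_le_iff₀ hν).mp hlim
    calc ‖g z‖ * ‖φ z‖ ^ n ≤ ‖g z‖ * (assocWeight ω ‖φ z‖ * S) := h1
      _ = (‖g z‖ * assocWeight ω ‖φ z‖) * S := by ring
      _ ≤ ((L + ε) * ν ‖z‖) * S := mul_le_mul_of_nonneg_right h2 hSpos.le
      _ = (L + ε) * S * ν ‖z‖ := by ring
end
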